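/- Let n > 1 and let S be a closed subspace of H²(𝔻ⁿ). Then S reduces each of M_{z_2}, ..., M_{z_n} (i.e., M_{z_i} P_S = P_S M_{z_i} for 2 ≤ i ≤ n) if and only if S = S_1 ⊗ H²(𝔻^{n-1}) for some closed subspace S_1 of H²(𝔻). -/

import Mathlib

open ContinuousLinearMap
open scoped InnerProductSpace ENNReal

namespace Stmt11

variable {m : ℕ}

noncomputable abbrev Hb (m : ℕ) := lp (fun _ : ℕ × (Fin m → ℕ) => ℂ) 2
noncomputable abbrev H1 := lp (fun _ : ℕ => ℂ) 2

instance : DecidableRel ((· ≤ ·) : (Fin m → ℕ) → (Fin m → ℕ) → Prop) :=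
  fun u v => decidable_of_iff (∀ i, u i ≤ v i) Iff.rfl

lemma single_one_apply (x y : ℕ × (Fin m → ℕ)) :
    (lp.single 2 x (1:ℂ) : Hb m) y = if y = x then 1 else 0 := by
  rcases eq_or_ne y x with rfl | h
  · simp [lp.single_apply_self]
  · simp [lp.single_apply_ne 2 x _ h, h]

lemma eval_eq_inner (f : Hb m) (x : ℕ × (Fin m → ℕ)) :
    ⟪(lp.single 2 x (1:ℂ) : Hb m), f⟫_ℂ = f x := by
  rw [lp.inner_single_left]
  simp [RCLike.inner_apply]

section Ops

variable (S : Fin m → (Hb m →L[ℂ] Hb m))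
variable (hS : ∀ (j : Fin m) (a : ℕ) (g : Fin m → ℕ),
      S j (lp.single 2 (a, g) (1 : ℂ)) = lp.single 2 (a, g + Pi.single j 1) (1 : ℂ))

include hS

lemma adj_apply (j : Fin m) (f : Hb m) (a : ℕ) (g : Fin m → ℕ) :
    (adjoint (S j) f) (a, g) = f (a, g + Pi.single j 1) := by
  rw [← eval_eq_inner, adjoint_inner_right, hS, eval_eq_inner]

lemma adj_single (j : Fin m) (a : ℕ) (g : Fin m → ℕ) :
    adjoint (S j) (lp.single 2 (a, g) (1:ℂ)) =
      if g j = 0 then 0 else (lp.single 2 (a, g - Pi.single j 1) (1:ℂ) : Hb m) := by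
  apply lp.ext
  funext x
  rcases x with ⟨b, k⟩
  rw [adj_apply S hS]
  rcases eq_or_ne (g j) 0 with hg | hg
  · rw [if_pos hg, single_one_apply, lp.coeFn_zero, Pi.zero_apply, if_neg]
    intro hc
    have := congrArg Prod.snd hc
    have := congrFun this j
    simp [hg] at this
  · rw [if_neg hg, single_one_apply, single_one_apply]
    congr 1
    simp only [Prod.ext_iff, eq_iff_iff, and_congr_right_iff]
    intro _
    constructor
    · intro h
      funext i
      have := congrFun h i
      rcases eq_or_ne i j with rfl | hij
      · simp only [Pi.add_apply, Pi.single_eq_same] at this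
        simp only [Pi.sub_apply, Pi.single_eq_same]
        omega
      · simpa [Pi.single_eq_of_ne hij] using this
    · intro h
      subst h
      funext i
      rcases eq_or_ne i j with rfl | hij
      · simp only [Pi.add_apply, Pi.sub_apply, Pi.single_eq_same]
        omega
      · simp [Pi.single_eq_of_ne hij]

lemma shift_apply (j : Fin m) (f : Hb m) (a : ℕ) (g : Fin m → ℕ) :
    (S j f) (a, g) = if g j = 0 then 0 else f (a, g - Pi.single j 1) := by
  rw [← eval_eq_inner, ← adjoint_inner_left, adj_single S hS]
  rcases eq_or_ne (g j) 0 with hg | hg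
  · simp [hg]
  · rw [if_neg hg, if_neg hg, eval_eq_inner]

end Ops

lemma pi_single_le (j : Fin m) (k : ℕ) (g : Fin m → ℕ) :
    Pi.single j k ≤ g ↔ k ≤ g j := by
  constructor
  · intro h
    simpa using h j
  · intro h i
    rcases eq_or_ne i j with rfl | hij
    · simpa using h
    · simp [Pi.single_eq_of_ne hij]

lemma pi_single_add (j : Fin m) (k l : ℕ) :
    (Pi.single j k : Fin m → ℕ) + Pi.single j l = Pi.single j (k + l) := by
  funext i
  rcases eq_or_ne i j with rfl | hij
  · simp
  · simp [Pi.single_eq_of_ne hij]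

lemma pi_le_and (u v w : Fin m → ℕ) : (u ≤ w ∧ v ≤ w - u) ↔ u + v ≤ w := by
  simp only [Pi.le_def, Pi.sub_apply, Pi.add_apply]
  constructor
  · rintro ⟨h1, h2⟩ i
    have := h1 i; have := h2 i; omega
  · intro h
    constructor <;> intro i <;> have := h i <;> omega

lemma pi_sub_sub (w u v : Fin m → ℕ) : w - u - v = w - (u + v) := by
  funext i
  simp only [Pi.sub_apply, Pi.add_apply]
  omega

lemma sum_single_finRange (g : Fin m → ℕ) :
    ((List.finRange m).map (fun j => Pi.single j (g j))).sum = g := by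
  have h1 : ((List.finRange m).map (fun j => Pi.single j (g j))).sum
      = ∑ j, Pi.single j (g j) := by
    rw [Fin.univ_def]; rfl
  rw [h1]
  funext i
  rw [Finset.sum_apply]
  exact Fintype.sum_pi_single i g

section Ops2

variable (S : Fin m → (Hb m →L[ℂ] Hb m))
variable (hS : ∀ (j : Fin m) (a : ℕ) (g : Fin m → ℕ),
      S j (lp.single 2 (a, g) (1 : ℂ)) = lp.single 2 (a, g + Pi.single j 1) (1 : ℂ))

include hS

lemma adj_pow_apply (j : Fin m) (k : ℕ) (f : Hb m) (a : ℕ) (g : Fin m → ℕ) :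
    (((adjoint (S j))^k) f) (a, g) = f (a, g + Pi.single j k) := by
  induction k generalizing g with
  | zero => simp
  | succ k ih =>
      rw [pow_succ', mul_apply_eq_comp, adj_apply S hS, ih, add_assoc, pi_single_add, Nat.add_comm 1 k]

lemma shift_pow_apply (j : Fin m) (k : ℕ) (f : Hb m) (a : ℕ) (g : Fin m → ℕ) :
    (((S j)^k) f) (a, g) = if Pi.single j k ≤ g then f (a, g - Pi.single j k) else 0 := by
  induction k generalizing g with
  | zero =>
      simp only [pow_zero, one_apply_eq_self, Pi.single_zero]
      rw [if_pos (by exact (zero_le : (0 : Fin m → ℕ) ≤ g))]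
      congr 2
  | succ k ih =>
      rw [pow_succ', mul_apply_eq_comp, shift_apply S hS]
      rcases eq_or_ne (g j) 0 with hg | hg
      · rw [if_pos hg, if_neg]
        rw [pi_single_le]; omega
      · rw [if_neg hg, ih]
        have h1 : (Pi.single j k ≤ g - Pi.single j 1) ↔ (Pi.single j (k+1) ≤ g) := by
          rw [pi_single_le, pi_single_le, Pi.sub_apply, Pi.single_eq_same]
          omega
        have h2 : g - Pi.single j 1 - Pi.single j k = g - Pi.single j (k+1) := by
          rw [pi_sub_sub, pi_single_add, Nat.add_comm 1 k]
        rw [h2]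
        exact if_congr h1 rfl rfl

lemma one_sub_apply (j : Fin m) (f : Hb m) (a : ℕ) (g : Fin m → ℕ) :
    ((1 - S j * adjoint (S j)) f) (a, g) = if g j = 0 then f (a, g) else 0 := by
  rw [sub_apply, one_apply_eq_self, lp.coeFn_sub, Pi.sub_apply, mul_apply_eq_comp, shift_apply S hS]
  rcases eq_or_ne (g j) 0 with hg | hg
  · rw [if_pos hg, if_pos hg, sub_zero]
  · rw [if_neg hg, if_neg hg, adj_apply S hS]
    have : g - Pi.single j 1 + Pi.single j 1 = g := by
      funext i
      rcases eq_or_ne i j with rfl | hij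
      · simp only [Pi.add_apply, Pi.sub_apply, Pi.single_eq_same]; omega
      · simp [Pi.single_eq_of_ne hij]
    rw [this, sub_self]

lemma foldE_apply (L : List (Fin m)) (f : Hb m) (a : ℕ) (g : Fin m → ℕ) :
    ((L.foldr (fun j acc => (1 - S j * adjoint (S j)) * acc) 1) f) (a, g)
      = if (∀ j ∈ L, g j = 0) then f (a, g) else 0 := by
  induction L with
  | nil => simp
  | cons j L ih =>
      rw [List.foldr_cons, mul_apply_eq_comp, one_sub_apply S hS, ih]
      simp only [List.forall_mem_cons]
      split_ifs with h1 h2 h3 <;> tauto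

lemma foldT_apply (g : Fin m → ℕ) (L : List (Fin m)) (f : Hb m) (a : ℕ) (h : Fin m → ℕ) :
    ((L.foldr (fun j acc => (adjoint (S j))^(g j) * acc) 1) f) (a, h)
      = f (a, h + (L.map (fun j => Pi.single j (g j))).sum) := by
  induction L generalizing h with
  | nil => simp
  | cons j L ih =>
      rw [List.foldr_cons, mul_apply_eq_comp, adj_pow_apply S hS, ih, List.map_cons, List.sum_cons,
        add_assoc]

lemma foldS_apply (g : Fin m → ℕ) (L : List (Fin m)) (f : Hb m) (a : ℕ) (h : Fin m → ℕ) :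
    ((L.foldr (fun j acc => (S j)^(g j) * acc) 1) f) (a, h)
      = if (L.map (fun j => Pi.single j (g j))).sum ≤ h
          then f (a, h - (L.map (fun j => Pi.single j (g j))).sum) else 0 := by
  induction L generalizing h with
  | nil =>
      simp only [List.foldr_nil, one_apply_eq_self, List.map_nil, List.sum_nil]
      rw [if_pos (zero_le : (0 : Fin m → ℕ) ≤ h)]
      congr 2
  | cons j L ih =>
      rw [List.foldr_cons, mul_apply_eq_comp, shift_pow_apply S hS, List.map_cons, List.sum_cons]
      by_cases hle : Pi.single j (g j) ≤ h
      · rw [if_pos hle, ih, pi_sub_sub]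
        exact if_congr (by rw [← pi_le_and]; simp [hle]) rfl rfl
      · rw [if_neg hle, if_neg]
        rw [← pi_le_and]
        intro hc
        exact hle hc.1

end Ops2


lemma inj_slice (g : Fin m → ℕ) :
    Function.Injective (fun a : ℕ => ((a, g) : ℕ × (Fin m → ℕ))) := by
  intro a b hab
  simpa using congrArg Prod.fst hab

lemma memℓp_emb (q : H1) :
    Memℓp (fun x : ℕ × (Fin m → ℕ) => if x.2 = 0 then q x.1 else 0) 2 := by
  apply memℓp_gen
  have hsum : Summable (fun a : ℕ => ‖q a‖ ^ (2:ℝ≥0∞).toReal) :=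
    (lp.memℓp q).summable (by norm_num)
  refine (Function.Injective.summable_iff (inj_slice (0 : Fin m → ℕ)) ?_).mp ?_
  · intro x hx
    rcases x with ⟨a, h⟩
    have hh : h ≠ 0 := by
      intro h0
      exact hx ⟨a, by simp [h0]⟩
    simp only [hh, if_false]
    rw [norm_zero, Real.zero_rpow (by norm_num)]
  · simpa [Function.comp_def] using hsum

lemma memℓp_slice (f : Hb m) (g : Fin m → ℕ) :
    Memℓp (fun a : ℕ => f (a, g)) 2 := by
  apply memℓp_gen
  have hsum : Summable (fun x : ℕ × (Fin m → ℕ) => ‖f x‖ ^ (2:ℝ≥0∞).toReal) :=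
    (lp.memℓp f).summable (by norm_num)
  exact hsum.comp_injective (inj_slice g)

noncomputable def embL : H1 →ₗ[ℂ] Hb m where
  toFun q := ⟨fun x => if x.2 = 0 then q x.1 else 0, memℓp_emb q⟩
  map_add' q r := by
    apply lp.ext
    funext x
    simp only [lp.coeFn_add, Pi.add_apply]
    change _ = (if x.2 = 0 then q x.1 else 0) + (if x.2 = 0 then r x.1 else 0)
    change (if x.2 = 0 then (q + r) x.1 else 0) = _
    rw [lp.coeFn_add, Pi.add_apply]
    split_ifs <;> simp
  map_smul' c q := by
    apply lp.ext
    funext x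
    simp only [RingHom.id_apply, lp.coeFn_smul, Pi.smul_apply]
    change (if x.2 = 0 then (c • q) x.1 else 0) = c • (if x.2 = 0 then q x.1 else 0)
    rw [lp.coeFn_smul, Pi.smul_apply]
    split_ifs <;> simp

lemma embL_apply (q : H1) (x : ℕ × (Fin m → ℕ)) :
    (embL (m := m) q) x = if x.2 = 0 then q x.1 else 0 := rfl

lemma embL_norm (q : H1) : ‖embL (m := m) q‖ = ‖q‖ := by
  rw [lp.norm_eq_tsum_rpow (by norm_num) (embL q), lp.norm_eq_tsum_rpow (by norm_num) q]
  congr 1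
  rw [← Function.Injective.tsum_eq (inj_slice (0 : Fin m → ℕ))
    (f := fun x : ℕ × (Fin m → ℕ) => ‖(embL (m := m) q) x‖ ^ (2:ℝ≥0∞).toReal)]
  · apply tsum_congr
    intro a
    simp [embL_apply]
  · rintro ⟨a, h⟩ hx
    have hh : h = 0 := by
      by_contra hh
      apply hx
      show ‖(embL (m := m) q) (a, h)‖ ^ (2:ℝ≥0∞).toReal = 0
      rw [embL_apply]
      simp only [hh, if_false]
      rw [norm_zero, Real.zero_rpow (by norm_num)]
    exact ⟨a, by simp [hh]⟩

noncomputable def emb : H1 →L[ℂ] Hb m :=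
  (embL (m := m)).mkContinuous 1 (fun q => by rw [embL_norm, one_mul])

lemma emb_apply (q : H1) (x : ℕ × (Fin m → ℕ)) :
    (emb (m := m) q) x = if x.2 = 0 then q x.1 else 0 := rfl

lemma emb_apply' (q : H1) (a : ℕ) (h : Fin m → ℕ) :
    (emb (m := m) q) (a, h) = if h = 0 then q a else 0 := rfl

noncomputable def slice (f : Hb m) (g : Fin m → ℕ) : H1 :=
  ⟨fun a => f (a, g), memℓp_slice f g⟩

lemma slice_apply (f : Hb m) (g : Fin m → ℕ) (a : ℕ) : (slice f g) a = f (a, g) := rfl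

lemma single_zero' (x : ℕ × (Fin m → ℕ)) : (lp.single 2 x (0:ℂ) : Hb m) = 0 := by
  apply lp.ext
  funext y
  rcases eq_or_ne y x with rfl | h
  · simp [lp.single_apply_self]
  · simp [lp.single_apply_ne 2 x _ h]

lemma pi_le_sub_eq (g h : Fin m → ℕ) : (g ≤ h ∧ h - g = 0) ↔ h = g := by
  constructor
  · rintro ⟨h1, h2⟩
    rw [Pi.le_def] at h1
    funext i
    have ha := h1 i
    have hb := congrFun h2 i
    simp only [Pi.sub_apply, Pi.zero_apply] at hb
    omega
  · rintro rfl
    simp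

lemma all_finRange_zero (h : Fin m → ℕ) : (∀ j ∈ List.finRange m, h j = 0) ↔ h = 0 := by
  constructor
  · intro hh
    funext i
    exact hh i (List.mem_finRange i)
  · rintro rfl j _
    rfl

lemma commute_foldr (P : Hb m →L[ℂ] Hb m) (F : Fin m → (Hb m →L[ℂ] Hb m))
    (hF : ∀ j, Commute P (F j)) (L : List (Fin m)) :
    Commute P (L.foldr (fun j acc => F j * acc) 1) := by
  induction L with
  | nil => simp only [List.foldr_nil]; exact Commute.one_right P
  | cons j L ih => simpa using (hF j).mul_right ih

end Stmt11

set_option maxHeartbeats 2000000 in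
open Stmt11 in
/-- Realize `H²(𝔻ⁿ)` (`n = m + 1 > 1`) as
`H²(𝔻) ⊗ H²(𝔻^m) ≅ ℓ²(ℕ × ℕ^m)`, with coordinate shifts `S j` (`2 ≤ j ≤ n`) acting in the last
`m` variables on the canonical basis `e_{(a,g)}` by `S j e_{(a,g)} = e_{(a, g + δ_j)}`.  A closed
subspace `𝒮`, with orthogonal projection `P` (self-adjoint idempotent with range `𝒮`), reduces
each of `M_{z_2}, …, M_{z_n}` (i.e. `S j P = P S j` for all `j`) if and only if
`𝒮 = 𝒮₁ ⊗ H²(𝔻^m)` for some closed subspace `𝒮₁ ⊆ H²(𝔻) ≅ ℓ²(ℕ)`; the tensor product is the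
subspace of those `f` all of whose first-variable slices `a ↦ f (a, g)` lie in `𝒮₁`. -/
theorem reducing_iff_tensor_with_full_space
    {m : ℕ} (hm : 1 ≤ m)
    (S : Fin m → (lp (fun _ : ℕ × (Fin m → ℕ) => ℂ) 2 →L[ℂ] lp (fun _ : ℕ × (Fin m → ℕ) => ℂ) 2))
    (hS : ∀ (j : Fin m) (a : ℕ) (g : Fin m → ℕ),
      S j (lp.single 2 (a, g) (1 : ℂ)) = lp.single 2 (a, g + Pi.single j 1) (1 : ℂ))
    (𝒮 : Submodule ℂ (lp (fun _ : ℕ × (Fin m → ℕ) => ℂ) 2))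
    (h𝒮 : IsClosed (𝒮 : Set (lp (fun _ : ℕ × (Fin m → ℕ) => ℂ) 2)))
    (P : lp (fun _ : ℕ × (Fin m → ℕ) => ℂ) 2 →L[ℂ] lp (fun _ : ℕ × (Fin m → ℕ) => ℂ) 2)
    (hPsa : IsSelfAdjoint P)
    (hPidem : P ∘L P = P)
    (hPrange : Set.range P = (𝒮 : Set (lp (fun _ : ℕ × (Fin m → ℕ) => ℂ) 2))) :
    (∀ j, S j ∘L P = P ∘L S j) ↔
      ∃ 𝒮₁ : Submodule ℂ (lp (fun _ : ℕ => ℂ) 2),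
        IsClosed (𝒮₁ : Set (lp (fun _ : ℕ => ℂ) 2)) ∧
        (𝒮 : Set (lp (fun _ : ℕ × (Fin m → ℕ) => ℂ) 2)) =
          {f : lp (fun _ : ℕ × (Fin m → ℕ) => ℂ) 2 | ∀ g : Fin m → ℕ, ∃ q ∈ 𝒮₁,
            ∀ a : ℕ, (q : ∀ _ : ℕ, ℂ) a = (f : ∀ _ : ℕ × (Fin m → ℕ), ℂ) (a, g)} := by
  have memP : ∀ x : Hb m, x ∈ 𝒮 ↔ P x = x := by
    intro x
    constructor
    · intro hx
      have hx' : x ∈ Set.range P := by rw [hPrange]; exact hx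
      obtain ⟨y, rfl⟩ := hx'
      have h1 : (P ∘L P) y = P y := by rw [hPidem]
      simpa using h1
    · intro hx
      have h1 : x ∈ Set.range P := ⟨x, hx⟩
      rwa [hPrange] at h1
  have hPx : ∀ x : Hb m, P x ∈ 𝒮 := by
    intro x
    have h1 : P x ∈ Set.range P := ⟨x, rfl⟩
    rwa [hPrange] at h1
  have hadjP : ContinuousLinearMap.adjoint P = P := by
    rw [← ContinuousLinearMap.star_eq_adjoint]
    exact hPsa
  constructor
  · intro hcomm
    have hcommT : ∀ j, ContinuousLinearMap.adjoint (S j) ∘L P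
        = P ∘L ContinuousLinearMap.adjoint (S j) := by
      intro j
      have h1 := congrArg ContinuousLinearMap.adjoint (hcomm j)
      rw [ContinuousLinearMap.adjoint_comp, ContinuousLinearMap.adjoint_comp, hadjP] at h1
      exact h1.symm
    have cS : ∀ j, Commute P (S j) := fun j => (hcomm j).symm
    have cT : ∀ j, Commute P (ContinuousLinearMap.adjoint (S j)) := fun j => (hcommT j).symm
    obtain ⟨E0, hE0def⟩ : ∃ E : Hb m →L[ℂ] Hb m, E = (List.finRange m).foldr
        (fun j acc => (1 - S j * ContinuousLinearMap.adjoint (S j)) * acc) 1 := ⟨_, rfl⟩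
    obtain ⟨Tg, hTgdef⟩ : ∃ T : (Fin m → ℕ) → (Hb m →L[ℂ] Hb m), T = fun g =>
        (List.finRange m).foldr
          (fun j acc => (ContinuousLinearMap.adjoint (S j))^(g j) * acc) 1 := ⟨_, rfl⟩
    obtain ⟨Wg, hWgdef⟩ : ∃ W : (Fin m → ℕ) → (Hb m →L[ℂ] Hb m), W = fun g =>
        (List.finRange m).foldr (fun j acc => (S j)^(g j) * acc) 1 := ⟨_, rfl⟩
    have cE0 : Commute P E0 := by
      rw [hE0def]
      exact commute_foldr P _
        (fun j => (Commute.one_right P).sub_right ((cS j).mul_right (cT j))) _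
    have cTg : ∀ g, Commute P (Tg g) := by
      intro g
      rw [hTgdef]
      exact commute_foldr P _ (fun j => (cT j).pow_right _) _
    have cWg : ∀ g, Commute P (Wg g) := by
      intro g
      rw [hWgdef]
      exact commute_foldr P _ (fun j => (cS j).pow_right _) _
    have hE0c : ∀ (f : Hb m) (a : ℕ) (h : Fin m → ℕ),
        (E0 f) (a, h) = if h = 0 then f (a, h) else 0 := by
      intro f a h
      simp only [hE0def]
      rw [foldE_apply S hS]
      exact if_congr (all_finRange_zero h) rfl rfl
    have hTgc : ∀ (g : Fin m → ℕ) (f : Hb m) (a : ℕ) (h : Fin m → ℕ),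
        (Tg g f) (a, h) = f (a, h + g) := by
      intro g f a h
      simp only [hTgdef]
      rw [foldT_apply S hS, sum_single_finRange]
    have hWgc : ∀ (g : Fin m → ℕ) (f : Hb m) (a : ℕ) (h : Fin m → ℕ),
        (Wg g f) (a, h) = if g ≤ h then f (a, h - g) else 0 := by
      intro g f a h
      simp only [hWgdef]
      rw [foldS_apply S hS, sum_single_finRange]
    refine ⟨𝒮.comap (emb (m := m)).toLinearMap, ?_, ?_⟩
    · exact IsClosed.preimage (emb (m := m)).continuous h𝒮
    · apply Set.ext
      intro f
      simp only [Set.mem_setOf_eq, SetLike.mem_coe]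
      constructor
      · intro hf g
        refine ⟨slice f g, ?_, fun a => rfl⟩
        rw [Submodule.mem_comap]
        have key : (emb (m := m)).toLinearMap (slice f g) = E0 ((Tg g) f) := by
          apply lp.ext
          funext x
          rcases x with ⟨a, h⟩
          have e1 : ((emb (m := m)).toLinearMap (slice f g) : ∀ _ : ℕ × (Fin m → ℕ), ℂ) (a, h)
              = if h = 0 then f (a, g) else 0 := emb_apply' (slice f g) a h
          rw [e1, hE0c, hTgc]
          by_cases hh : h = 0
          · rw [if_pos hh, if_pos hh, hh, zero_add]
          · rw [if_neg hh, if_neg hh]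
        rw [key]
        have hPf := (memP f).mp hf
        have h1 : (P * (E0 * Tg g)) f = ((E0 * Tg g) * P) f := by
          rw [(cE0.mul_right (cTg g)).eq]
        simp only [mul_apply_eq_comp] at h1
        exact (memP _).mpr (by rw [h1, hPf])
      · intro hf
        have hBmem : ∀ g : Fin m → ℕ, (Wg g) (E0 ((Tg g) f)) ∈ 𝒮 := by
          intro g
          obtain ⟨q, hq, hqa⟩ := hf g
          rw [Submodule.mem_comap] at hq
          replace hq : (emb (m := m)) q ∈ 𝒮 := hq
          have key : (Wg g) (E0 ((Tg g) f)) = (Wg g) ((emb (m := m)) q) := by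
            apply lp.ext
            funext x
            rcases x with ⟨a, h⟩
            rw [hWgc, hWgc]
            by_cases hgh : g ≤ h
            · rw [if_pos hgh, if_pos hgh, hE0c, hTgc, emb_apply']
              by_cases h0 : h - g = 0
              · rw [if_pos h0, if_pos h0, hqa a, h0, zero_add]
              · rw [if_neg h0, if_neg h0]
            · rw [if_neg hgh, if_neg hgh]
          rw [key]
          have hq' := (memP _).mp hq
          have h1 : (P * Wg g) ((emb (m := m)) q) = (Wg g * P) ((emb (m := m)) q) := by
            rw [(cWg g).eq]
          simp only [mul_apply_eq_comp] at h1
          exact (memP _).mpr (by rw [h1, hq'])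
        have hBc : ∀ (g : Fin m → ℕ) (a : ℕ) (h : Fin m → ℕ),
            ((Wg g) (E0 ((Tg g) f))) (a, h) = if h = g then f (a, g) else 0 := by
          intro g a h
          rw [hWgc]
          by_cases hgh : g ≤ h
          · rw [if_pos hgh, hE0c, hTgc]
            by_cases h0 : h - g = 0
            · rw [if_pos h0, if_pos ((pi_le_sub_eq g h).mp ⟨hgh, h0⟩), h0, zero_add]
            · rw [if_neg h0, if_neg (fun hc => h0 (((pi_le_sub_eq g h).mpr hc).2))]
          · rw [if_neg hgh, if_neg (fun hc => hgh (((pi_le_sub_eq g h).mpr hc).1))]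
        have hsum : HasSum (fun g : Fin m → ℕ => (Wg g) (E0 ((Tg g) f))) f := by
          have h1 : HasSum (fun x : ℕ × (Fin m → ℕ) => lp.single 2 x (f x)) f :=
            lp.hasSum_single (by norm_num) f
          have h2 : HasSum ((fun x : ℕ × (Fin m → ℕ) => lp.single 2 x (f x))
              ∘ (Equiv.prodComm (Fin m → ℕ) ℕ)) f :=
            (Equiv.prodComm (Fin m → ℕ) ℕ).hasSum_iff.mpr h1
          refine HasSum.prod_fiberwise h2 (fun g => ?_)
          have h3 : HasSum (fun x : ℕ × (Fin m → ℕ) =>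
                (lp.single 2 x (((Wg g) (E0 ((Tg g) f))) x)
                  : lp (fun _ : ℕ × (Fin m → ℕ) => ℂ) 2)) ((Wg g) (E0 ((Tg g) f))) :=
            lp.hasSum_single (by norm_num) ((Wg g) (E0 ((Tg g) f)))
          have hz : ∀ x ∉ Set.range (fun a : ℕ => ((a, g) : ℕ × (Fin m → ℕ))),
              (lp.single 2 x (((Wg g) (E0 ((Tg g) f))) x)
                : lp (fun _ : ℕ × (Fin m → ℕ) => ℂ) 2) = 0 := by
            rintro ⟨a, h⟩ hx
            have hh : h ≠ g := by
              intro h0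
              exact hx ⟨a, by rw [h0]⟩
            rw [hBc, if_neg hh, single_zero']
          have h4 := ((inj_slice g).hasSum_iff hz).mpr h3
          have h5 : (fun a : ℕ => (lp.single 2 ((a, g) : ℕ × (Fin m → ℕ))
                (((Wg g) (E0 ((Tg g) f))) (a, g)) : lp (fun _ : ℕ × (Fin m → ℕ) => ℂ) 2))
              = fun a : ℕ => (lp.single 2 ((a, g) : ℕ × (Fin m → ℕ)) (f (a, g))
                : lp (fun _ : ℕ × (Fin m → ℕ) => ℂ) 2) := by
            funext a
            rw [hBc, if_pos rfl]
          convert h4 using 1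
          funext a
          simp only [Function.comp_apply, Equiv.prodComm_apply, Prod.swap_prod_mk]
          rw [hBc, if_pos rfl]
        have hmemall : ∀ s : Finset (Fin m → ℕ),
            ∑ g ∈ s, (Wg g) (E0 ((Tg g) f)) ∈ 𝒮 :=
          fun s => Submodule.sum_mem _ (fun g _ => hBmem g)
        exact h𝒮.mem_of_tendsto hsum (Filter.Eventually.of_forall hmemall)
  · rintro ⟨𝒮₁, h1c, hset⟩ j
    have hmem : ∀ x : Hb m, x ∈ 𝒮 ↔ ∀ g : Fin m → ℕ, ∃ q ∈ 𝒮₁,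
        ∀ a : ℕ, (q : ∀ _ : ℕ, ℂ) a = x (a, g) := by
      intro x
      have h := Set.ext_iff.mp hset x
      rw [SetLike.mem_coe, Set.mem_setOf_eq] at h
      exact h
    have hSinv : ∀ x, x ∈ 𝒮 → S j x ∈ 𝒮 := by
      intro x hx
      rw [hmem] at hx ⊢
      intro g
      by_cases hg : g j = 0
      · refine ⟨0, Submodule.zero_mem _, fun a => ?_⟩
        rw [shift_apply S hS, if_pos hg, lp.coeFn_zero, Pi.zero_apply]
      · obtain ⟨q, hq, hqa⟩ := hx (g - Pi.single j 1)
        exact ⟨q, hq, fun a => by rw [shift_apply S hS, if_neg hg]; exact hqa a⟩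
    have hTinv : ∀ x, x ∈ 𝒮 → ContinuousLinearMap.adjoint (S j) x ∈ 𝒮 := by
      intro x hx
      rw [hmem] at hx ⊢
      intro g
      obtain ⟨q, hq, hqa⟩ := hx (g + Pi.single j 1)
      exact ⟨q, hq, fun a => by rw [adj_apply S hS]; exact hqa a⟩
    have e1 : P ∘L (S j ∘L P) = S j ∘L P := by
      apply ContinuousLinearMap.ext
      intro x
      simp only [ContinuousLinearMap.comp_apply]
      exact (memP _).mp (hSinv _ (hPx x))
    have e2 : P ∘L (ContinuousLinearMap.adjoint (S j) ∘L P)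
        = ContinuousLinearMap.adjoint (S j) ∘L P := by
      apply ContinuousLinearMap.ext
      intro x
      simp only [ContinuousLinearMap.comp_apply]
      exact (memP _).mp (hTinv _ (hPx x))
    have e3 := congrArg ContinuousLinearMap.adjoint e2
    simp only [ContinuousLinearMap.adjoint_comp, ContinuousLinearMap.adjoint_adjoint,
      hadjP] at e3
    calc S j ∘L P = P ∘L (S j ∘L P) := e1.symm
    _ = (P ∘L S j) ∘L P := by rw [ContinuousLinearMap.comp_assoc]
    _ = P ∘L S j := e3
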